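/- Let n ≥ 3 be an integer and p, q real numbers with p < (n-2)/(n-1) and q < (n-2)/(n-1). Then there exist real numbers α, β ∈ (0, 1 - 1/n) and δ ∈ (0, 1/n) such that (1-β)(1-p) - δ > 0, (1-α)(1-q) - δ > 0, (1/n + β - 1)p + 1 - β - 2/n > 0, and (1/n + α - 1)q + 1 - α - 2/n > 0. -/

import Mathlib

theorem stmt0 (n : ℕ) (hn : 3 ≤ n) (p q : ℝ)
    (hp : p < ((n : ℝ) - 2) / ((n : ℝ) - 1)) (hq : q < ((n : ℝ) - 2) / ((n : ℝ) - 1)) :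
    ∃ α β δ : ℝ, α ∈ Set.Ioo (0 : ℝ) (1 - 1 / (n : ℝ)) ∧ β ∈ Set.Ioo (0 : ℝ) (1 - 1 / (n : ℝ)) ∧
      δ ∈ Set.Ioo (0 : ℝ) (1 / (n : ℝ)) ∧
      (1 - β) * (1 - p) - δ > 0 ∧ (1 - α) * (1 - q) - δ > 0 ∧
      (1 / (n : ℝ) + β - 1) * p + 1 - β - 2 / (n : ℝ) > 0 ∧
      (1 / (n : ℝ) + α - 1) * q + 1 - α - 2 / (n : ℝ) > 0 := by
  have hn3 : (3:ℝ) ≤ (n:ℝ) := by exact_mod_cast hn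
  have hnpos : (0:ℝ) < (n:ℝ) := by linarith
  have hn1 : (0:ℝ) < (n:ℝ) - 1 := by linarith
  have hninv : (0:ℝ) < 1/(n:ℝ) := by positivity
  have hb : 1 - 1/(n:ℝ) < 1 := by linarith
  have hbpos : 0 < 1 - 1/(n:ℝ) := by
    have : 1/(n:ℝ) ≤ 1/3 := by
      apply div_le_div_of_nonneg_left (by norm_num) (by norm_num) hn3
    linarith
  have hp1 : p < 1 := lt_of_lt_of_le hp (by rw [div_le_one hn1]; linarith)
  have hq1 : q < 1 := lt_of_lt_of_le hq (by rw [div_le_one hn1]; linarith)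
  have h1p : p * ((n:ℝ)-1) < (n:ℝ)-2 := (lt_div_iff₀ hn1).mp hp
  have h1q : q * ((n:ℝ)-1) < (n:ℝ)-2 := (lt_div_iff₀ hn1).mp hq
  set εp : ℝ := 1 - 2/(n:ℝ) - (1 - 1/(n:ℝ)) * p with hεpdef
  set εq : ℝ := 1 - 2/(n:ℝ) - (1 - 1/(n:ℝ)) * q with hεqdef
  have hεp : 0 < εp := by
    have heq : εp = ((n:ℝ) - 2 - p * ((n:ℝ)-1))/(n:ℝ) := by
      rw [hεpdef, eq_div_iff hnpos.ne']; linear_combination (p - 2) * (mul_inv_cancel₀ hnpos.ne')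
    rw [heq]
    apply div_pos (by linarith) hnpos
  have hεq : 0 < εq := by
    have heq : εq = ((n:ℝ) - 2 - q * ((n:ℝ)-1))/(n:ℝ) := by
      rw [hεqdef, eq_div_iff hnpos.ne']; linear_combination (q - 2) * (mul_inv_cancel₀ hnpos.ne')
    rw [heq]
    apply div_pos (by linarith) hnpos
  set β : ℝ := min ((1 - 1/(n:ℝ))/2) (εp/(2*(1-p))) with hβdef
  set α : ℝ := min ((1 - 1/(n:ℝ))/2) (εq/(2*(1-q))) with hαdef
  have hβpos : 0 < β := lt_min (by linarith) (div_pos hεp (by linarith))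
  have hαpos : 0 < α := lt_min (by linarith) (div_pos hεq (by linarith))
  have hβlt : β < 1 - 1/(n:ℝ) := lt_of_le_of_lt (min_le_left _ _) (by linarith)
  have hαlt : α < 1 - 1/(n:ℝ) := lt_of_le_of_lt (min_le_left _ _) (by linarith)
  have hβ1 : β < 1 := by linarith
  have hα1 : α < 1 := by linarith
  have hβle : β ≤ εp/(2*(1-p)) := min_le_right _ _
  have hαle : α ≤ εq/(2*(1-q)) := min_le_right _ _
  have hβεp : β * (1 - p) ≤ εp/2 := by
    have := mul_le_mul_of_nonneg_right hβle (by linarith : (0:ℝ) ≤ 1 - p)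
    calc β * (1 - p) ≤ εp/(2*(1-p)) * (1-p) := this
      _ = εp/2 := by
        have h : (1:ℝ)-p ≠ 0 := by linarith
        field_simp
  have hαεq : α * (1 - q) ≤ εq/2 := by
    have := mul_le_mul_of_nonneg_right hαle (by linarith : (0:ℝ) ≤ 1 - q)
    calc α * (1 - q) ≤ εq/(2*(1-q)) * (1-q) := this
      _ = εq/2 := by
        have h : (1:ℝ)-q ≠ 0 := by linarith
        field_simp
  have hBp : 0 < (1 - β) * (1 - p) := mul_pos (by linarith) (by linarith)
  have hAq : 0 < (1 - α) * (1 - q) := mul_pos (by linarith) (by linarith)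
  set δ : ℝ := min (1/(2*(n:ℝ))) (min ((1-β)*(1-p)/2) ((1-α)*(1-q)/2)) with hδdef
  have hδpos : 0 < δ := lt_min (by positivity) (lt_min (by linarith) (by linarith))
  have hδ1 : δ ≤ 1/(2*(n:ℝ)) := min_le_left _ _
  have hδ2 : δ ≤ (1-β)*(1-p)/2 := le_trans (min_le_right _ _) (min_le_left _ _)
  have hδ3 : δ ≤ (1-α)*(1-q)/2 := le_trans (min_le_right _ _) (min_le_right _ _)
  clear_value εp εq β α δ
  refine ⟨α, β, δ, ⟨hαpos, hαlt⟩, ⟨hβpos, hβlt⟩, ⟨hδpos, ?_⟩, ?_, ?_, ?_, ?_⟩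
  · have : 1/(2*(n:ℝ)) < 1/(n:ℝ) := by
      rw [div_lt_div_iff₀ (by linarith) hnpos]; linarith
    linarith
  · linarith
  · linarith
  · have : (1/(n:ℝ) + β - 1) * p + 1 - β - 2/(n:ℝ) = εp - β * (1 - p) := by
      rw [hεpdef]; ring
    rw [this]; linarith
  · have : (1/(n:ℝ) + α - 1) * q + 1 - α - 2/(n:ℝ) = εq - α * (1 - q) := by
      rw [hεqdef]; ring
    rw [this]; linarith
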